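/- Let n ≥ 3 and assume the hypotheses (★) and (†). Then for all roots α, β, γ ∈ Φ with γ = β − α ∈ Φ, the following identity holds on U: α·(R^{β} − R^{−β}) w_β + α·(R^{γ} − R^{−γ}) w_γ = c^{β}_{αγ} (z_γ − z_β). -/

import Mathlib

open scoped Classical

noncomputable section

/-- The `i`-th standard basis vector of `ℝ^n`. -/
def stdE {n : ℕ} (i : Fin n) : Fin n → ℝ := fun k => if k = i then 1 else 0

/-- The set of roots of `gl_n`: `Φ = {e_i − e_j : i ≠ j}`. -/
def Phi (n : ℕ) : Set (Fin n → ℝ) :=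
  {x | ∃ i j : Fin n, i ≠ j ∧ x = stdE i - stdE j}

/-- Euclidean dot product on `ℝ^n`. -/
def dotR {n : ℕ} (x y : Fin n → ℝ) : ℝ := ∑ k, x k * y k

/-- Structure constants of `gl_n`: for roots `α = e_a − e_b`, `γ = e_c − e_d` with
`α + γ ∈ Φ`, `cst α γ = δ_{bc} − δ_{da}` (the coefficient of `e_{α+γ}` in
`[e_{ab}, e_{cd}] = δ_{bc} e_{ad} − δ_{da} e_{cb}`), and `cst α γ = 0` in every
other case (in particular when a subscript fails to be a root, so that terms
containing `cst` with a non-root subscript are absent). -/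
def cst {n : ℕ} (α γ : Fin n → ℝ) : ℝ :=
  if α ∈ Phi n ∧ γ ∈ Phi n ∧ α + γ ∈ Phi n then
    (∑ k, max (-(α k)) 0 * max (γ k) 0) - (∑ k, max (α k) 0 * max (-(γ k)) 0)
  else 0

/-- Sum of a quantity over all roots `α ∈ Φ` (each root `e_i − e_j`, `i ≠ j`,
occurring exactly once). -/
def sumPhi {n : ℕ} (f : (Fin n → ℝ) → ℂ) : ℂ :=
  ∑ p ∈ (Finset.univ : Finset (Fin n)).offDiag, f (stdE p.1 - stdE p.2)

/-- `z(x) = w″(x)/(2 w(x))`. -/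
def zfun (w : ℝ → ℂ) (x : ℝ) : ℂ := deriv (deriv w) x / (2 * w x)

section Aux

variable {n : ℕ}

lemma mem_phi {i j : Fin n} (h : i ≠ j) : stdE i - stdE j ∈ Phi n := ⟨i, j, h, rfl⟩

lemma phi_bound {x : Fin n → ℝ} (h : x ∈ Phi n) (k : Fin n) : -1 ≤ x k ∧ x k ≤ 1 := by
  obtain ⟨i, j, hij, rfl⟩ := h
  simp only [Pi.sub_apply, stdE]
  split_ifs <;> norm_num

lemma sum_stdE_mul (i j : Fin n) : ∑ k, stdE i k * stdE j k = if i = j then 1 else 0 := by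
  simp [stdE, ite_and, Finset.sum_ite_eq, eq_comm]

lemma max_neg_part {a b : Fin n} (hab : a ≠ b) (k : Fin n) :
    max (-((stdE a - stdE b) k)) 0 = stdE b k := by
  simp only [Pi.sub_apply, stdE]
  by_cases hka : k = a
  · subst hka; simp [hab]
  · by_cases hkb : k = b <;> simp [hka, hkb, Ne.symm hab]

lemma max_pos_part {a b : Fin n} (hab : a ≠ b) (k : Fin n) :
    max ((stdE a - stdE b) k) 0 = stdE a k := by
  simp only [Pi.sub_apply, stdE]
  by_cases hka : k = a
  · subst hka; simp [hab]
  · by_cases hkb : k = b <;> simp [hka, hkb, Ne.symm hab]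

lemma cst_eval {a b c d : Fin n} (hab : a ≠ b) (hcd : c ≠ d)
    (hmem : (stdE a - stdE b) + (stdE c - stdE d) ∈ Phi n) :
    cst (stdE a - stdE b) (stdE c - stdE d) =
      (if b = c then 1 else 0) - (if a = d then 1 else 0) := by
  rw [cst, if_pos ⟨mem_phi hab, mem_phi hcd, hmem⟩]
  simp only [max_neg_part hab, max_pos_part hcd, max_neg_part hcd, max_pos_part hab]
  rw [sum_stdE_mul, sum_stdE_mul]

lemma cst_zero_right {α x : Fin n → ℝ} (h : x ∉ Phi n) : cst α x = 0 := by
  rw [cst, if_neg]; tauto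

set_option linter.unnecessarySeqFocus false in
lemma key {a b c d : Fin n} (hab : a ≠ b) (hcd : c ≠ d)
    (h : ((stdE c - stdE d) - (stdE a - stdE b) : Fin n → ℝ) ∈ Phi n) :
    (c = a ∧ d ≠ b) ∨ (d = b ∧ c ≠ a) := by
  by_cases hca : c = a
  · by_cases hdb : d = b
    · exfalso
      obtain ⟨e, f, hef, heq⟩ := h
      have h1 := congrFun heq e
      subst hca; subst hdb
      simp [Pi.sub_apply, stdE, hef] at h1
    · exact Or.inl ⟨hca, hdb⟩
  · by_cases hdb : d = b
    · exact Or.inr ⟨hdb, hca⟩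
    · exfalso
      obtain ⟨e, f, hef, heq⟩ := h
      have hcb : c ≠ b := by
        intro hcb
        have h1 := congrFun heq c
        simp only [Pi.sub_apply, stdE, if_true] at h1
        rw [if_neg hcd, if_neg hca, if_pos hcb] at h1
        split_ifs at h1 <;> norm_num at h1
      have had : a ≠ d := by
        intro had
        have h1 := congrFun heq a
        simp only [Pi.sub_apply, stdE, if_true] at h1
        rw [if_neg (fun hh => hca hh.symm), if_pos had, if_neg hab] at h1
        split_ifs at h1 <;> norm_num at h1
      have haf : a = f := by
        have h1 := congrFun heq a
        simp only [Pi.sub_apply, stdE, if_true] at h1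
        rw [if_neg (fun hh => hca hh.symm), if_neg had, if_neg hab] at h1
        split_ifs at h1 <;> norm_num at h1 <;> assumption
      have hdf : d = f := by
        have h1 := congrFun heq d
        simp only [Pi.sub_apply, stdE, if_true] at h1
        rw [if_neg (fun hh => hcd hh.symm), if_neg (fun hh => had hh.symm),
          if_neg hdb] at h1
        split_ifs at h1 <;> norm_num at h1 <;> assumption
      exact had (haf.trans hdf.symm)

lemma deriv_even_pt {D : Set ℝ} (hDopen : IsOpen D)
    {w : ℝ → ℂ} (hwodd : ∀ x ∈ D, w (-x) = -w x) {y : ℝ} (hy : y ∈ D) :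
    deriv w (-y) = deriv w y := by
  have h1 : (fun s => w (-s)) =ᶠ[nhds y] (fun s => -w s) := by
    filter_upwards [hDopen.mem_nhds hy] with s hs using hwodd s hs
  have h2 := h1.deriv_eq
  rw [deriv_comp_neg, deriv.fun_neg] at h2
  exact neg_injective h2

lemma deriv2_odd_pt {D : Set ℝ} (hDopen : IsOpen D)
    {w : ℝ → ℂ} (hwodd : ∀ x ∈ D, w (-x) = -w x) {y : ℝ} (hy : y ∈ D) :
    deriv (deriv w) (-y) = -deriv (deriv w) y := by
  have h1 : (fun s => deriv w (-s)) =ᶠ[nhds y] deriv w := by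
    filter_upwards [hDopen.mem_nhds hy] with s hs using deriv_even_pt hDopen hwodd hs
  have h2 := h1.deriv_eq
  rw [deriv_comp_neg] at h2
  exact neg_eq_iff_eq_neg.mp h2

lemma zfun_even_pt {D : Set ℝ} (hDopen : IsOpen D)
    {w : ℝ → ℂ} (hwodd : ∀ x ∈ D, w (-x) = -w x) {y : ℝ} (hy : y ∈ D) :
    zfun w (-y) = zfun w y := by
  rw [zfun, zfun, deriv2_odd_pt hDopen hwodd hy, hwodd y hy, mul_neg, neg_div_neg_eq]

lemma analytic {D : Set ℝ} (hDopen : IsOpen D) (hDsymm : ∀ x ∈ D, -x ∈ D)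
    (w : ℝ → ℂ) (hwne : ∀ x ∈ D, w x ≠ 0) (hwodd : ∀ x ∈ D, w (-x) = -w x)
    (hadd : ∀ x ∈ D, ∀ y ∈ D, x + y ∈ D →
      w x * deriv w y - w y * deriv w x = (zfun w x - zfun w y) * w (x + y))
    (x y t : ℝ) (hx : x ∈ D) (hy : y ∈ D) (ht : t ∈ D) (hxyt : t = y - x)
    (cc Sb Sg R : ℂ)
    (hA : Sb * w x = cc * (-(deriv w x) / w x - deriv w y / w y + 2 * R) * w t)
    (hB : Sg * w x = -(cc * (-(deriv w x) / w x + deriv w t / w t + 2 * R) * w y)) :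
    Sb * w y + Sg * w t = cc * (zfun w t - zfun w y) := by
  have hwx := hwne x hx
  have hwy := hwne y hy
  have hwt := hwne t ht
  have hmy : -y ∈ D := hDsymm y hy
  have htny : t + -y = -x := by rw [hxyt]; ring
  have hAF := hadd t ht (-y) hmy (by rw [htny]; exact hDsymm x hx)
  rw [htny, deriv_even_pt hDopen hwodd hy, hwodd y hy, hwodd x hx,
    zfun_even_pt hDopen hwodd hy] at hAF
  have hA' : Sb * (w x * w x * w y) =
      cc * (-(deriv w x) * w y - deriv w y * w x + 2 * R * (w x * w y)) * w t := by
    field_simp at hA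
    linear_combination hA
  have hB' : Sg * (w x * w x * w t) =
      -(cc * (-(deriv w x) * w t + deriv w t * w x + 2 * R * (w x * w t)) * w y) := by
    field_simp at hB
    linear_combination hB
  have hkey : (Sb * w y + Sg * w t) * (w x * w x * w y * w t) =
      (cc * (zfun w t - zfun w y)) * (w x * w x * w y * w t) := by
    linear_combination (w y * w t) * hA' + (w y * w t) * hB' - (cc * w x * w y * w t) * hAF
  exact mul_right_cancel₀ (mul_ne_zero (mul_ne_zero (mul_ne_zero hwx hwx) hwy) hwt) hkey

lemma mainStep
    (D : Set ℝ) (hDopen : IsOpen D) (hDsymm : ∀ x ∈ D, -x ∈ D)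
    (w : ℝ → ℂ) (hwne : ∀ x ∈ D, w x ≠ 0) (hwodd : ∀ x ∈ D, w (-x) = -w x)
    (U : Set (Fin n → ℝ)) (hUD : ∀ q ∈ U, ∀ α ∈ Phi n, dotR α q ∈ D)
    (hadd : ∀ x ∈ D, ∀ y ∈ D, x + y ∈ D →
      w x * deriv w y - w y * deriv w x = (zfun w x - zfun w y) * w (x + y))
    (RhR : Fin n → (Fin n → ℝ) → (Fin n → ℝ) → ℂ)
    (Ropp : (Fin n → ℝ) → (Fin n → ℝ) → ℂ)
    (hdagger : ∀ q ∈ U, ∀ α ∈ Phi n, ∀ β ∈ Phi n, α ≠ β → α ≠ -β →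
      (∑ i, (α i : ℂ) * (RhR i β q - RhR i (-β) q)) * w (dotR α q) =
        (cst α (β - α) : ℂ) *
            (-(deriv w (dotR α q)) / w (dotR α q)
              - deriv w (dotR β q) / w (dotR β q) + 2 * Ropp α q) * w (dotR (β - α) q)
          - (cst (-α) (β + α) : ℂ) *
              (-(deriv w (dotR α q)) / w (dotR α q)
                + deriv w (dotR β q) / w (dotR β q) + 2 * Ropp α q) * w (dotR (β + α) q))
    (α β γ : Fin n → ℝ) (hα : α ∈ Phi n) (hβ : β ∈ Phi n) (hγ : γ ∈ Phi n)
    (hγeq : γ = β - α) (q : Fin n → ℝ) (hq : q ∈ U)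
    (hne1 : α ≠ β) (hne2 : α ≠ -β) (hne3 : α ≠ γ) (hne4 : α ≠ -γ)
    (hnm1 : β + α ∉ Phi n) (hnm2 : γ - α ∉ Phi n)
    (hF1 : cst (-α) β = cst α γ) :
    (∑ i, (α i : ℂ) * (RhR i β q - RhR i (-β) q)) * w (dotR β q)
        + (∑ i, (α i : ℂ) * (RhR i γ q - RhR i (-γ) q)) * w (dotR γ q) =
      (cst α γ : ℂ) * (zfun w (dotR γ q) - zfun w (dotR β q)) := by
  have hxD := hUD q hq α hα
  have hyD := hUD q hq β hβ
  have htD := hUD q hq γ hγ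
  have hxyt : dotR γ q = dotR β q - dotR α q := by
    rw [hγeq]
    simp [dotR, Pi.sub_apply, sub_mul, Finset.sum_sub_distrib]
  have hA := hdagger q hq α hα β hβ hne1 hne2
  rw [← hγeq, cst_zero_right hnm1] at hA
  simp only [Complex.ofReal_zero, zero_mul, sub_zero] at hA
  have hba : γ + α = β := by rw [hγeq]; abel
  have hB := hdagger q hq α hα γ hγ hne3 hne4
  rw [cst_zero_right hnm2, hba, hF1] at hB
  simp only [Complex.ofReal_zero, zero_mul, zero_sub] at hB
  exact analytic hDopen hDsymm w hwne hwodd hadd _ _ _ hxD hyD htD hxyt _ _ _ _ hA hB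

end Aux

theorem statement4
    (n : ℕ) (hn : 3 ≤ n)
    (D : Set ℝ) (hDopen : IsOpen D) (hD0 : (0:ℝ) ∉ D) (hDsymm : ∀ x ∈ D, -x ∈ D)
    (w : ℝ → ℂ) (hw : ContDiffOn ℝ 2 w D) (hwne : ∀ x ∈ D, w x ≠ 0)
    (hwodd : ∀ x ∈ D, w (-x) = -w x)
    (U : Set (Fin n → ℝ)) (hUne : U.Nonempty) (hUconv : Convex ℝ U)
    (hUopen : IsOpen U) (hUD : ∀ q ∈ U, ∀ α ∈ Phi n, dotR α q ∈ D)
    (hadd : ∀ x ∈ D, ∀ y ∈ D, x + y ∈ D →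
      w x * deriv w y - w y * deriv w x = (zfun w x - zfun w y) * w (x + y))
    (RhR : Fin n → (Fin n → ℝ) → (Fin n → ℝ) → ℂ)
    (Rsame Ropp : (Fin n → ℝ) → (Fin n → ℝ) → ℂ)
    (hstar1 : ∀ q ∈ U, ∀ α ∈ Phi n, Ropp α q + Ropp (-α) q = 0)
    (hstar2 : ∀ q ∈ U, ∀ α ∈ Phi n, Rsame α q + Rsame (-α) q = 0)
    (hstar3 : ∀ q ∈ U, ∀ α ∈ Phi n,
      Rsame α q + Ropp (-α) q = -(deriv w (dotR α q)) / w (dotR α q))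
    (hdagger : ∀ q ∈ U, ∀ α ∈ Phi n, ∀ β ∈ Phi n, α ≠ β → α ≠ -β →
      (∑ i, (α i : ℂ) * (RhR i β q - RhR i (-β) q)) * w (dotR α q) =
        (cst α (β - α) : ℂ) *
            (-(deriv w (dotR α q)) / w (dotR α q)
              - deriv w (dotR β q) / w (dotR β q) + 2 * Ropp α q) * w (dotR (β - α) q)
          - (cst (-α) (β + α) : ℂ) *
              (-(deriv w (dotR α q)) / w (dotR α q)
                + deriv w (dotR β q) / w (dotR β q) + 2 * Ropp α q) * w (dotR (β + α) q))
 :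
    ∀ α ∈ Phi n, ∀ β ∈ Phi n, ∀ γ ∈ Phi n, γ = β - α → ∀ q ∈ U,
      (∑ i, (α i : ℂ) * (RhR i β q - RhR i (-β) q)) * w (dotR β q)
          + (∑ i, (α i : ℂ) * (RhR i γ q - RhR i (-γ) q)) * w (dotR γ q) =
        (cst α γ : ℂ) * (zfun w (dotR γ q) - zfun w (dotR β q)) := by
  intro α hα β hβ γ hγ hγeq q hq
  obtain ⟨a, b, hab, hαe⟩ := id hα
  obtain ⟨c, d, hcd, hβe⟩ := id hβ
  have hkeyh : ((stdE c - stdE d) - (stdE a - stdE b) : Fin n → ℝ) ∈ Phi n := by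
    rw [← hβe, ← hαe, ← hγeq]; exact hγ
  rcases key hab hcd hkeyh with ⟨hca, hdb⟩ | ⟨hdb, hca⟩
  · -- case c = a : α = A−B, β = A−D, γ = B−D
    have hβe2 : β = stdE a - stdE d := by rw [hβe, hca]
    have had : a ≠ d := hca ▸ hcd
    have hbd : b ≠ d := fun h => hdb h.symm
    have hda : d ≠ a := fun h => had h.symm
    have hγe : γ = stdE b - stdE d := by
      rw [hγeq, hβe2, hαe]; ext k; simp only [Pi.sub_apply]; ring
    have hne1 : α ≠ β := by
      rw [hαe, hβe2]; intro h
      have h1 := congrFun h d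
      simp [Pi.sub_apply, stdE, hda, hdb] at h1
    have hne2 : α ≠ -β := by
      rw [hαe, hβe2]; intro h
      have h1 := congrFun h a
      simp [Pi.sub_apply, Pi.neg_apply, stdE, hab, had] at h1
      norm_num at h1
    have hne3 : α ≠ γ := by
      rw [hαe, hγe]; intro h
      have h1 := congrFun h a
      simp [Pi.sub_apply, stdE, hab, had] at h1
    have hne4 : α ≠ -γ := by
      rw [hαe, hγe]; intro h
      have h1 := congrFun h a
      simp [Pi.sub_apply, Pi.neg_apply, stdE, hab, had] at h1
    have hnm1 : β + α ∉ Phi n := by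
      rw [hβe2, hαe]; intro hm
      have h2 := (phi_bound hm a).2
      simp [Pi.add_apply, Pi.sub_apply, stdE, hab, had] at h2
      norm_num at h2
    have hnm2 : γ - α ∉ Phi n := by
      rw [hγe, hαe]; intro hm
      have h2 := (phi_bound hm b).2
      simp [Pi.sub_apply, stdE, Ne.symm hab, hbd] at h2
      norm_num at h2
    have hsum1 : (stdE a - stdE b) + (stdE b - stdE d) = stdE a - stdE d := by
      ext k; simp only [Pi.add_apply, Pi.sub_apply]; ring
    have e1 : cst α γ = 1 := by
      rw [hαe, hγe, cst_eval hab hbd (by rw [hsum1]; exact mem_phi had)]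
      simp [had]
    have hnegα : -α = stdE b - stdE a := by rw [hαe, neg_sub]
    have hsum2 : (stdE b - stdE a) + (stdE a - stdE d) = stdE b - stdE d := by
      ext k; simp only [Pi.add_apply, Pi.sub_apply]; ring
    have e2 : cst (-α) β = 1 := by
      rw [hnegα, hβe2, cst_eval (Ne.symm hab) had (by rw [hsum2]; exact mem_phi hbd)]
      simp [hbd]
    exact mainStep D hDopen hDsymm w hwne hwodd U hUD hadd RhR Ropp hdagger
      α β γ hα hβ hγ hγeq q hq hne1 hne2 hne3 hne4 hnm1 hnm2 (e2.trans e1.symm)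
  · -- case d = b : α = A−B, β = C−B, γ = C−A
    have hβe2 : β = stdE c - stdE b := by rw [hβe, hdb]
    have hcb : c ≠ b := hdb ▸ hcd
    have hac : a ≠ c := fun h => hca h.symm
    have hbc : b ≠ c := fun h => hcb h.symm
    have hba : b ≠ a := Ne.symm hab
    have hγe : γ = stdE c - stdE a := by
      rw [hγeq, hβe2, hαe]; ext k; simp only [Pi.sub_apply]; ring
    have hne1 : α ≠ β := by
      rw [hαe, hβe2]; intro h
      have h1 := congrFun h a
      simp [Pi.sub_apply, stdE, hab, hac] at h1
    have hne2 : α ≠ -β := by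
      rw [hαe, hβe2]; intro h
      have h1 := congrFun h a
      simp [Pi.sub_apply, Pi.neg_apply, stdE, hab, hac] at h1
    have hne3 : α ≠ γ := by
      rw [hαe, hγe]; intro h
      have h1 := congrFun h b
      simp [Pi.sub_apply, stdE, hba, hbc] at h1
    have hne4 : α ≠ -γ := by
      rw [hαe, hγe]; intro h
      have h1 := congrFun h b
      simp [Pi.sub_apply, Pi.neg_apply, stdE, hba, hbc] at h1
    have hnm1 : β + α ∉ Phi n := by
      rw [hβe2, hαe]; intro hm
      have h2 := (phi_bound hm b).1
      simp [Pi.add_apply, Pi.sub_apply, stdE, hba, hbc] at h2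
      norm_num at h2
    have hnm2 : γ - α ∉ Phi n := by
      rw [hγe, hαe]; intro hm
      have h2 := (phi_bound hm a).1
      simp [Pi.sub_apply, stdE, hab, hac] at h2
      norm_num at h2
    have hsum1 : (stdE a - stdE b) + (stdE c - stdE a) = stdE c - stdE b := by
      ext k; simp only [Pi.add_apply, Pi.sub_apply]; ring
    have e1 : cst α γ = -1 := by
      rw [hαe, hγe, cst_eval hab hca (by rw [hsum1]; exact mem_phi hcb)]
      simp [hbc]
    have hnegα : -α = stdE b - stdE a := by rw [hαe, neg_sub]
    have hsum2 : (stdE b - stdE a) + (stdE c - stdE b) = stdE c - stdE a := by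
      ext k; simp only [Pi.add_apply, Pi.sub_apply]; ring
    have e2 : cst (-α) β = -1 := by
      rw [hnegα, hβe2, cst_eval hba hcb (by rw [hsum2]; exact mem_phi hca)]
      simp [hac]
    exact mainStep D hDopen hDsymm w hwne hwodd U hUD hadd RhR Ropp hdagger
      α β γ hα hβ hγ hγeq q hq hne1 hne2 hne3 hne4 hnm1 hnm2 (e2.trans e1.symm)

end
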